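/- arXiv:2605.25864 — 3 statements merged into one kernel-verified Lean document; each statement's English description precedes it below -/
import Mathlib

section
/- Let K ∈ ℝ^{G×G} be symmetric positive definite, and let u, v be unit vectors in ℝ^G lying in the hyperplane H = {w : 1ᵀw = 0}, with γ = ⟨u, v⟩ ∈ (−1, 1). Let λ_max and λ_min be the maximum and minimum of the Rayleigh quotient wᵀKw/wᵀw over nonzero w ∈ H, and set κ = λ_max/λ_min. Then (uᵀKv)/(√(uᵀKu)·√(vᵀKv)) ≤ (κ(1+γ) − (1−γ)) / (κ(1+γ) + (1−γ)). -/
open Matrix Finset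

lemma key_scalar (lm lM a b d g r : ℝ) (hlm : 0 < lm)
    (ha1 : lm ≤ a) (ha2 : a ≤ lM) (hb1 : lm ≤ b) (hb2 : b ≤ lM)
    (hg1 : -1 < g) (hg2 : g < 1)
    (hr : 0 < r) (hr2 : r^2 = a*b) (hab : 2*r ≤ a+b)
    (h1 : (d - lm*g)^2 ≤ (a - lm)*(b - lm))
    (h2 : (lM*g - d)^2 ≤ (lM - a)*(lM - b)) :
    d * ((lM-lm)*g + (lM+lm)) ≤ r * ((lM+lm)*g + (lM-lm)) := by
  have hml : lm ≤ lM := le_trans ha1 ha2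
  have hrl : lm ≤ r := by nlinarith
  have hrM : r ≤ lM := by nlinarith
  have h1s : (d - lm*g)^2 ≤ (r - lm)^2 := by nlinarith
  have h2s : (lM*g - d)^2 ≤ (lM - r)^2 := by nlinarith
  have h1' : d - lm*g ≤ r - lm := by nlinarith [sq_nonneg (d - lm*g + (r - lm))]
  have h2' : d - lM*g ≤ lM - r := by nlinarith [sq_nonneg (lM*g - d - (lM - r))]
  have hA := mul_le_mul_of_nonneg_left h1' (by nlinarith : (0:ℝ) ≤ lM*(1+g))
  have hB := mul_le_mul_of_nonneg_left h2' (by nlinarith : (0:ℝ) ≤ lm*(1-g))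
  nlinarith [hA, hB]

/-- K-weighted cosine bound: for unit vectors `u, v` in the centered hyperplane with
Euclidean cosine `γ`, the `K`-weighted cosine is at most
`(κ(1+γ) - (1-γ)) / (κ(1+γ) + (1-γ))` where `κ` is the condition number of `K` on `H`. -/
theorem stmt_5 (G : ℕ) (hG : 2 ≤ G) (K : Matrix (Fin G) (Fin G) ℝ)
    (hKsymm : K.IsSymm) (hKpd : K.PosDef)
    (u v : Fin G → ℝ) (hu : u ⬝ᵥ u = 1) (hv : v ⬝ᵥ v = 1)
    (huH : ∑ i, u i = 0) (hvH : ∑ i, v i = 0)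
    (γ : ℝ) (hγ : γ = u ⬝ᵥ v) (hγl : -1 < γ) (hγu : γ < 1)
    (lmax lmin : ℝ)
    (hmax : IsGreatest
      {r : ℝ | ∃ w : Fin G → ℝ, w ≠ 0 ∧ (∑ i, w i = 0) ∧
        r = (w ⬝ᵥ K.mulVec w) / (w ⬝ᵥ w)} lmax)
    (hmin : IsLeast
      {r : ℝ | ∃ w : Fin G → ℝ, w ≠ 0 ∧ (∑ i, w i = 0) ∧
        r = (w ⬝ᵥ K.mulVec w) / (w ⬝ᵥ w)} lmin)
    (κ : ℝ) (hκ : κ = lmax / lmin) :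
    (u ⬝ᵥ K.mulVec v) /
      (Real.sqrt (u ⬝ᵥ K.mulVec u) * Real.sqrt (v ⬝ᵥ K.mulVec v)) ≤
      (κ * (1 + γ) - (1 - γ)) / (κ * (1 + γ) + (1 - γ)) := by
  -- Rayleigh quotient bounds
  have hray : ∀ w : Fin G → ℝ, (∑ i, w i = 0) → 0 < w ⬝ᵥ w →
      lmin * (w ⬝ᵥ w) ≤ w ⬝ᵥ K.mulVec w ∧ w ⬝ᵥ K.mulVec w ≤ lmax * (w ⬝ᵥ w) := by
    intro w hsum hpos
    have hw0 : w ≠ 0 := by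
      intro h; rw [h] at hpos; simp [zero_dotProduct] at hpos
    have hmem : (w ⬝ᵥ K.mulVec w) / (w ⬝ᵥ w) ∈
        {r : ℝ | ∃ w : Fin G → ℝ, w ≠ 0 ∧ (∑ i, w i = 0) ∧
          r = (w ⬝ᵥ K.mulVec w) / (w ⬝ᵥ w)} := ⟨w, hw0, hsum, rfl⟩
    exact ⟨(le_div_iff₀ hpos).1 (hmin.2 hmem), (div_le_iff₀ hpos).1 (hmax.2 hmem)⟩
  -- lmin positive
  have hlmin : 0 < lmin := by
    obtain ⟨w, hw0, hwsum, hwr⟩ := hmin.1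
    have hpd := hKpd.dotProduct_mulVec_pos hw0
    rw [star_trivial] at hpd
    have hnn : 0 ≤ w ⬝ᵥ w := by
      rw [dotProduct]
      exact Finset.sum_nonneg fun i _ => mul_self_nonneg _
    have hwdot : 0 < w ⬝ᵥ w := by
      rcases hnn.lt_or_eq with h | h
      · exact h
      · exact absurd (dotProduct_self_eq_zero.1 h.symm) hw0
    rw [hwr]; exact div_pos hpd hwdot
  -- symmetry
  have hsym : ∀ x y : Fin G → ℝ, x ⬝ᵥ K.mulVec y = y ⬝ᵥ K.mulVec x := by
    intro x y
    have h1 : x ᵥ* K = K *ᵥ x := by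
      nth_rewrite 1 [← hKsymm.eq]
      rw [Matrix.vecMul_transpose]
    rw [Matrix.dotProduct_mulVec, h1, dotProduct_comm]
  set a := u ⬝ᵥ K.mulVec u with ha_def
  set b := v ⬝ᵥ K.mulVec v with hb_def
  set d := u ⬝ᵥ K.mulVec v with hd_def
  clear_value a b d
  have hau := hray u huH (by rw [hu]; norm_num)
  have hbv := hray v hvH (by rw [hv]; norm_num)
  rw [hu, ← ha_def] at hau
  rw [hv, ← hb_def] at hbv
  have ha1 : lmin ≤ a := by linarith [hau.1]
  have ha2 : a ≤ lmax := by linarith [hau.2]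
  have hb1 : lmin ≤ b := by linarith [hbv.1]
  have hb2 : b ≤ lmax := by linarith [hbv.2]
  have hml : lmin ≤ lmax := le_trans ha1 ha2
  have ha0 : 0 < a := lt_of_lt_of_le hlmin ha1
  have hb0 : 0 < b := lt_of_lt_of_le hlmin hb1
  -- expansions for u + t • v
  have hedot : ∀ t : ℝ, (u + t • v) ⬝ᵥ (u + t • v) = 1 + 2*γ*t + t^2 := by
    intro t
    have h1 : (u + t • v) ⬝ᵥ (u + t • v)
        = u ⬝ᵥ u + t * (u ⬝ᵥ v) + t * (v ⬝ᵥ u) + t * (t * (v ⬝ᵥ v)) := by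
      simp [dotProduct_add, add_dotProduct, dotProduct_smul,
        smul_dotProduct, smul_eq_mul]
      ring
    rw [h1, hu, hv, dotProduct_comm v u, ← hγ]; ring
  have hKdot : ∀ t : ℝ, (u + t • v) ⬝ᵥ K.mulVec (u + t • v) = a + 2*d*t + b*t^2 := by
    intro t
    have h1 : (u + t • v) ⬝ᵥ K.mulVec (u + t • v)
        = u ⬝ᵥ K.mulVec u + t * (u ⬝ᵥ K.mulVec v) + t * (v ⬝ᵥ K.mulVec u)
          + t * (t * (v ⬝ᵥ K.mulVec v)) := by
      simp [Matrix.mulVec_add, Matrix.mulVec_smul, dotProduct_add,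
        add_dotProduct, dotProduct_smul, smul_dotProduct, smul_eq_mul]
      ring
    rw [h1, hsym v u, ← ha_def, ← hb_def, ← hd_def]; ring
  have hsum : ∀ t : ℝ, ∑ i, (u + t • v) i = 0 := by
    intro t
    have : ∑ i, (u + t • v) i = (∑ i, u i) + t * ∑ i, v i := by
      simp [Finset.sum_add_distrib, Finset.mul_sum]
    rw [this, huH, hvH]; ring
  have hposdot : ∀ t : ℝ, 0 < (u + t • v) ⬝ᵥ (u + t • v) := by
    intro t; rw [hedot t]; nlinarith [sq_nonneg (t + γ)]
  -- quadratic nonnegativity and discriminants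
  have q1 : ∀ t : ℝ, 0 ≤ (b - lmin) * (t * t) + (2*(d - lmin*γ)) * t + (a - lmin) := by
    intro t
    have h := (hray (u + t • v) (hsum t) (hposdot t)).1
    rw [hedot t, hKdot t] at h; nlinarith [h]
  have q2 : ∀ t : ℝ, 0 ≤ (lmax - b) * (t * t) + (2*(lmax*γ - d)) * t + (lmax - a) := by
    intro t
    have h := (hray (u + t • v) (hsum t) (hposdot t)).2
    rw [hedot t, hKdot t] at h; nlinarith [h]
  have hd1 := discrim_le_zero q1
  have hd2 := discrim_le_zero q2
  rw [discrim] at hd1 hd2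
  have h1 : (d - lmin*γ)^2 ≤ (a - lmin)*(b - lmin) := by nlinarith [hd1]
  have h2 : (lmax*γ - d)^2 ≤ (lmax - a)*(lmax - b) := by nlinarith [hd2]
  clear * - ha1 ha2 hb1 hb2 hγl hγu hlmin hml ha0 hb0 h1 h2 hκ
  -- define r
  set r := Real.sqrt a * Real.sqrt b with hr_def
  have hsa : Real.sqrt a ^ 2 = a := Real.sq_sqrt ha0.le
  have hsb : Real.sqrt b ^ 2 = b := Real.sq_sqrt hb0.le
  have hr : 0 < r := mul_pos (Real.sqrt_pos.2 ha0) (Real.sqrt_pos.2 hb0)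
  have hr2 : r^2 = a*b := by rw [hr_def, mul_pow, hsa, hsb]
  have hab : 2*r ≤ a + b := by
    have h := sq_nonneg (Real.sqrt a - Real.sqrt b)
    rw [sub_sq, hsa, hsb] at h
    rw [hr_def]; linarith
  clear_value r
  have key := key_scalar lmin lmax a b d γ r hlmin ha1 ha2 hb1 hb2 hγl hγu hr hr2 hab h1 h2
  -- finish
  have hD : 0 < (lmax - lmin)*γ + (lmax + lmin) := by
    linarith [mul_pos (hlmin.trans_le hml) (by linarith : (0:ℝ) < 1+γ),
      mul_pos hlmin (by linarith : (0:ℝ) < 1-γ)]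
  have e1 : lmax / lmin * (1 + γ) - (1 - γ)
      = ((lmax + lmin)*γ + (lmax - lmin)) / lmin := by
    field_simp; ring
  have e2 : lmax / lmin * (1 + γ) + (1 - γ)
      = ((lmax - lmin)*γ + (lmax + lmin)) / lmin := by
    field_simp; ring
  have hRHS : (κ * (1 + γ) - (1 - γ)) / (κ * (1 + γ) + (1 - γ))
      = ((lmax + lmin)*γ + (lmax - lmin)) / ((lmax - lmin)*γ + (lmax + lmin)) := by
    have hq : ∀ X Y : ℝ, Y ≠ 0 → (X/lmin)/(Y/lmin) = X/Y := by
      intro X Y hY; field_simp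
    rw [hκ, e1, e2, hq _ _ hD.ne']
  rw [hRHS]
  rw [div_le_div_iff₀ hr hD]
  linarith [key]
end

section
/- Let K ∈ ℝ^{G×G} be symmetric positive definite and let A, Â ∈ ℝ^G be centered vectors (entries summing to zero) with ‖A‖₂² = ‖Â‖₂² = G, and let d = ‖A − Â‖₂ > 0. Let κ be the ratio of the maximum to minimum of the Rayleigh quotient of K restricted to the centered subspace H = {w : 1ᵀw = 0}. Then cos θ := (AᵀKÂ)/(√(AᵀKA)·√(ÂᵀKÂ)) satisfies cos θ ≤ 1 − 2 / (4κ·G/d² − (κ−1)). -/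
open Matrix Finset

set_option maxHeartbeats 1000000 in
private lemma key_wielandt (l L a b p q r : ℝ) (hl : 0 < l) (hlL : l ≤ L)
    (ha : 0 ≤ a) (hb : 0 ≤ b)
    (hp2 : p ≤ L*a) (hq1 : l*b ≤ q)
    (hr1 : r^2 ≤ (p - l*a) * (q - l*b)) (hE : 0 < (p+q)^2 - 4*r^2) :
    (p - q) * (L*a + l*b) ≤ (L*a - l*b) * Real.sqrt ((p+q)^2 - 4*r^2) := by
  set Y := L*a - l*b with hY
  set S := L*a + l*b with hS
  set E := (p+q)^2 - 4*r^2 with hEdef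
  have hLpos : 0 < L := lt_of_lt_of_le hl hlL
  have hLa : 0 ≤ L*a := mul_nonneg hLpos.le ha
  have hlb : 0 ≤ l*b := mul_nonneg hl.le hb
  have hSpos : 0 ≤ S := by rw [hS]; linarith
  have hsqE : Real.sqrt E ^ 2 = E := Real.sq_sqrt hE.le
  have hsqEnn : 0 ≤ Real.sqrt E := Real.sqrt_nonneg _
  have sq_le : ∀ x y : ℝ, 0 ≤ x → 0 ≤ y → x^2 ≤ y^2 → x ≤ y := by
    intro x y hx hy h
    have := Real.sqrt_le_sqrt h
    rwa [Real.sqrt_sq hx, Real.sqrt_sq hy] at this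
  rcases le_or_gt Y 0 with hYneg | hYpos
  · have hX1 : 0 ≤ L*a*q - l*b*p := by nlinarith
    have hX2 : L*a*p - l*b*q ≤ 0 := by nlinarith
    have h1 : Y^2 * E ≤ (p-q)^2 * S^2 := by
      rw [hY, hS, hEdef]
      nlinarith [mul_nonneg hX1 (neg_nonneg.2 hX2), sq_nonneg r, sq_nonneg (L*a - l*b)]
    have hpq : p - q ≤ 0 := by nlinarith
    have h3 : (-Y) * Real.sqrt E ≤ (q-p)*S := by
      apply sq_le _ _ (mul_nonneg (neg_nonneg.2 hYneg) hsqEnn)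
        (mul_nonneg (by linarith) hSpos)
      have e1 : ((-Y) * Real.sqrt E)^2 = Y^2 * E := by
        rw [mul_pow, hsqE]; ring
      rw [e1]
      calc Y^2 * E ≤ (p-q)^2 * S^2 := h1
        _ = ((q-p)*S)^2 := by ring
    nlinarith [h3]
  · rcases le_or_gt p q with hpq | hpq
    · have h1 : (p-q)*S ≤ 0 := mul_nonpos_of_nonpos_of_nonneg (by linarith) hSpos
      have h2 : 0 ≤ Y * Real.sqrt E := mul_nonneg hYpos.le hsqEnn
      linarith
    · have hDle : p - q ≤ Y := by rw [hY]; linarith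
      have hcert : Y^2 * ((p-l*a)*(q-l*b)) ≤ (L*a*q - l*b*p)*(L*a*p - l*b*q) := by
        rw [hY]
        nlinarith [mul_nonneg (mul_nonneg hl.le (sq_nonneg (L*a-l*b)))
            (mul_nonneg (by linarith : (0:ℝ) ≤ a + b) (by linarith : (0:ℝ) ≤ q - l*b)),
          mul_nonneg (mul_nonneg hl.le hb)
            (mul_nonneg (by linarith : (0:ℝ) ≤ (L*a-l*b) - (p-q))
              (by nlinarith : (0:ℝ) ≤ (L*a-l*b)*(p-q) + l*b*((L*a-l*b) + (p-q))))]
      have h1 : (p-q)^2 * S^2 ≤ Y^2 * E := by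
        have hr' : Y^2 * r^2 ≤ Y^2 * ((p-l*a)*(q-l*b)) :=
          mul_le_mul_of_nonneg_left hr1 (sq_nonneg Y)
        rw [hS, hEdef]; rw [hY] at hr' hcert ⊢
        nlinarith [hr', hcert]
      apply sq_le _ _ (mul_nonneg (by linarith) hSpos) (mul_nonneg hYpos.le hsqEnn)
      have e1 : (Y * Real.sqrt E)^2 = Y^2 * E := by rw [mul_pow, hsqE]
      rw [e1, mul_pow]
      exact h1

set_option maxHeartbeats 1000000 in
/-- CAG upper-bounds gradient alignment: the `K`-weighted cosine of the advantage
vectors `A, Â` is at most `1 - 2 / (4κG/d² - (κ-1))` where `d` is the CAG score. -/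
theorem stmt_6 (G : ℕ) (hG : 2 ≤ G) (K : Matrix (Fin G) (Fin G) ℝ)
    (hKsymm : K.IsSymm) (hKpd : K.PosDef)
    (A Ahat : Fin G → ℝ)
    (hAc : ∑ i, A i = 0) (hAhatc : ∑ i, Ahat i = 0)
    (hAn : A ⬝ᵥ A = (G : ℝ)) (hAhatn : Ahat ⬝ᵥ Ahat = (G : ℝ))
    (d : ℝ) (hd : d = Real.sqrt ((A - Ahat) ⬝ᵥ (A - Ahat))) (hdpos : 0 < d)
    (lmax lmin : ℝ)
    (hmax : IsGreatest
      {r : ℝ | ∃ w : Fin G → ℝ, w ≠ 0 ∧ (∑ i, w i = 0) ∧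
        r = (w ⬝ᵥ K.mulVec w) / (w ⬝ᵥ w)} lmax)
    (hmin : IsLeast
      {r : ℝ | ∃ w : Fin G → ℝ, w ≠ 0 ∧ (∑ i, w i = 0) ∧
        r = (w ⬝ᵥ K.mulVec w) / (w ⬝ᵥ w)} lmin)
    (κ : ℝ) (hκ : κ = lmax / lmin) :
    (A ⬝ᵥ K.mulVec Ahat) /
      (Real.sqrt (A ⬝ᵥ K.mulVec A) * Real.sqrt (Ahat ⬝ᵥ K.mulVec Ahat)) ≤
      1 - 2 / (4 * κ * (G : ℝ) / d ^ 2 - (κ - 1)) := by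
  -- symmetry of the quadratic form
  have hsymm : ∀ v w : Fin G → ℝ, v ⬝ᵥ K.mulVec w = w ⬝ᵥ K.mulVec v := by
    intro v w
    rw [dotProduct_mulVec, ← mulVec_transpose, hKsymm, dotProduct_comm]
  -- positivity of dot squares
  have hdotnn : ∀ v : Fin G → ℝ, 0 ≤ v ⬝ᵥ v := by
    intro v
    exact Finset.sum_nonneg fun i _ => mul_self_nonneg _
  have hdotpos : ∀ v : Fin G → ℝ, v ≠ 0 → 0 < v ⬝ᵥ v := by
    intro v hv
    rcases (hdotnn v).lt_or_eq with h | h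
    · exact h
    · exact absurd (dotProduct_self_eq_zero.mp h.symm) hv
  have hpdpos : ∀ v : Fin G → ℝ, v ≠ 0 → 0 < v ⬝ᵥ K.mulVec v := by
    intro v hv
    have := hKpd.dotProduct_mulVec_pos hv
    simpa using this
  -- lmin positive, lmin ≤ lmax
  have hlmin : 0 < lmin := by
    obtain ⟨w, hw0, hwc, hwr⟩ := hmin.1
    rw [hwr]
    exact div_pos (hpdpos w hw0) (hdotpos w hw0)
  have hlL : lmin ≤ lmax := hmin.2 hmax.1
  -- Rayleigh bounds for centered vectors
  have hlow : ∀ w : Fin G → ℝ, (∑ i, w i = 0) → lmin * (w ⬝ᵥ w) ≤ w ⬝ᵥ K.mulVec w := by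
    intro w hw
    by_cases h0 : w = 0
    · simp [h0]
    · have hww := hdotpos w h0
      have := hmin.2 ⟨w, h0, hw, rfl⟩
      rw [le_div_iff₀ hww] at this
      linarith
  have hupp : ∀ w : Fin G → ℝ, (∑ i, w i = 0) → w ⬝ᵥ K.mulVec w ≤ lmax * (w ⬝ᵥ w) := by
    intro w hw
    by_cases h0 : w = 0
    · simp [h0]
    · have hww := hdotpos w h0
      have := hmax.2 ⟨w, h0, hw, rfl⟩
      rw [div_le_iff₀ hww] at this
      linarith
  set s : Fin G → ℝ := A + Ahat with hsdef
  set u : Fin G → ℝ := A - Ahat with hudef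
  set α : ℝ := s ⬝ᵥ s with hα
  set β : ℝ := u ⬝ᵥ u with hβ
  set p : ℝ := s ⬝ᵥ K.mulVec s with hp
  set q : ℝ := u ⬝ᵥ K.mulVec u with hq
  set r : ℝ := s ⬝ᵥ K.mulVec u with hr
  set a : ℝ := A ⬝ᵥ K.mulVec A with ha
  set b : ℝ := Ahat ⬝ᵥ K.mulVec Ahat with hb
  set c : ℝ := A ⬝ᵥ K.mulVec Ahat with hc
  have hsu : s ⬝ᵥ u = 0 := by
    simp only [hsdef, hudef, dotProduct_add, dotProduct_sub, add_dotProduct, sub_dotProduct,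
      dotProduct_comm Ahat A]
    rw [hAn, hAhatn]; ring
  have hsc : ∑ i, s i = 0 := by
    simp only [hsdef, Pi.add_apply, Finset.sum_add_distrib, hAc, hAhatc]; ring
  have huc : ∑ i, u i = 0 := by
    simp only [hudef, Pi.sub_apply, Finset.sum_sub_distrib, hAc, hAhatc]; ring
  -- numerics of α, β
  have hαnn : 0 ≤ α := hdotnn s
  have hβnn : 0 ≤ β := hdotnn u
  have hd2 : d ^ 2 = β := by
    rw [hd, Real.sq_sqrt hβnn]
  have hβpos : 0 < β := by rw [← hd2]; positivity
  have hG4 : α + β = 4 * (G : ℝ) := by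
    simp only [hα, hβ, hsdef, hudef, dotProduct_add, dotProduct_sub, add_dotProduct,
      sub_dotProduct, dotProduct_comm Ahat A]
    rw [hAn, hAhatn]; ring
  -- p, q, r in terms of a, b, c
  have hpab : p = a + b + 2*c := by
    simp only [hp, ha, hb, hc, hsdef, mulVec_add, add_dotProduct, dotProduct_add,
      hsymm Ahat A]
    ring
  have hqab : q = a + b - 2*c := by
    simp only [hq, ha, hb, hc, hudef, mulVec_sub, sub_dotProduct, dotProduct_sub,
      hsymm Ahat A]
    ring
  have hrab : r = a - b := by
    simp only [hr, ha, hb, hc, hsdef, hudef, mulVec_sub, add_dotProduct, dotProduct_sub,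
      hsymm Ahat A]
    ring
  -- a, b positive
  have hAne : A ≠ 0 := by
    intro h
    rw [h] at hAn
    simp only [zero_dotProduct] at hAn
    have : (0:ℝ) < (G:ℝ) := by exact_mod_cast Nat.lt_of_lt_of_le Nat.zero_lt_two hG
    linarith [hAn]
  have hAhatne : Ahat ≠ 0 := by
    intro h
    rw [h] at hAhatn
    simp only [zero_dotProduct] at hAhatn
    have : (0:ℝ) < (G:ℝ) := by exact_mod_cast Nat.lt_of_lt_of_le Nat.zero_lt_two hG
    linarith [hAhatn]
  have hapos : 0 < a := hpdpos A hAne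
  have hbpos : 0 < b := hpdpos Ahat hAhatne
  -- Rayleigh bounds
  have hp2 : p ≤ lmax * α := hupp s hsc
  have hq1 : lmin * β ≤ q := hlow u huc
  -- discriminant bound : r² ≤ (p - lmin α)(q - lmin β)
  have hdisc : r^2 ≤ (p - lmin*α) * (q - lmin*β) := by
    have hquad : ∀ t : ℝ, 0 ≤ (p - lmin*α) * (t*t) + (2*r) * t + (q - lmin*β) := by
      intro t
      have hcent : ∑ i, (t • s + u) i = 0 := by
        simp only [Pi.add_apply, Pi.smul_apply, smul_eq_mul, Finset.sum_add_distrib,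
          ← Finset.mul_sum, hsc, huc]
        ring
      have hlo := hlow (t • s + u) hcent
      have he1 : (t • s + u) ⬝ᵥ K.mulVec (t • s + u) = p * (t*t) + (2*r) * t + q := by
        simp only [mulVec_add, mulVec_smul, add_dotProduct, smul_dotProduct, dotProduct_add,
          dotProduct_smul, smul_eq_mul, hsymm u s, ← hp, ← hq, ← hr]
        ring
      have he2 : (t • s + u) ⬝ᵥ (t • s + u) = α * (t*t) + β := by
        have hus : u ⬝ᵥ s = 0 := by rw [dotProduct_comm]; exact hsu
        simp only [add_dotProduct, dotProduct_add, smul_dotProduct, dotProduct_smul,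
          smul_eq_mul, hsu, hus, ← hα, ← hβ]
        ring
      rw [he1, he2] at hlo
      nlinarith [hlo]
    have hds := discrim_le_zero hquad
    rw [discrim] at hds
    nlinarith [hds]
  -- apply key lemma
  have hE16 : (p+q)^2 - 4*r^2 = 16*(a*b) := by
    rw [hpab, hqab, hrab]; ring
  have hEpos : 0 < (p+q)^2 - 4*r^2 := by
    rw [hE16]; positivity
  have hkey := key_wielandt lmin lmax α β p q r hlmin hlL hαnn hβnn hp2 hq1 hdisc hEpos
  -- √E = 4 √a √b
  have hsab : Real.sqrt ((p+q)^2 - 4*r^2) = 4 * (Real.sqrt a * Real.sqrt b) := by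
    have : (p+q)^2 - 4*r^2 = (4 * (Real.sqrt a * Real.sqrt b))^2 := by
      rw [hE16, mul_pow, mul_pow, Real.sq_sqrt hapos.le, Real.sq_sqrt hbpos.le]
      ring
    rw [this, Real.sqrt_sq (by positivity)]
  rw [hsab] at hkey
  have hpmq : p - q = 4*c := by rw [hpab, hqab]; ring
  -- core inequality : c * S ≤ Y * (√a √b)
  have hcore : c * (lmax*α + lmin*β) ≤ (lmax*α - lmin*β) * (Real.sqrt a * Real.sqrt b) := by
    rw [hpmq] at hkey
    linarith
  -- rewrite RHS of the goal
  have hSpos : 0 < lmax*α + lmin*β := by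
    have : 0 ≤ lmax*α := mul_nonneg (hlmin.trans_le hlL).le hαnn
    nlinarith [mul_pos hlmin hβpos]
  have hGval : (G : ℝ) = (α + β)/4 := by linarith
  have hrhs : 1 - 2 / (4 * κ * (G : ℝ) / d ^ 2 - (κ - 1))
      = (lmax*α - lmin*β) / (lmax*α + lmin*β) := by
    have hX : 4 * κ * (G : ℝ) / d ^ 2 - (κ - 1) = (lmax*α + lmin*β)/(lmin*β) := by
      rw [hκ, hGval, hd2]
      field_simp
      ring
    rw [hX]
    have hm : (0:ℝ) < lmin*β := mul_pos hlmin hβpos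
    field_simp
    ring
  rw [hrhs]
  rw [div_le_div_iff₀ (by positivity) hSpos]
  linarith [hcore]
end

section
/- Let G ≥ 2 and let r̃ = (1,...,1,0,...,0) ∈ {0,1}^G with m ones (1 ≤ m ≤ G−1) be a pseudo-reward, and r = (0,...,0,1,...,1,0,...,0) a candidate ground-truth reward with k ones placed in positions m+1,...,m+k (1 ≤ k ≤ G−m). Let Ã and A be the respective GRPO group-normalized advantages A_i = (r_i − mean)/std. Then the CAG score s(k) = ‖A − Ã‖₂ satisfies s(k)² = 2G·(1 + √(mk/((G−m)(G−k)))). -/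
open Finset Matrix

lemma sum_three (G a b : ℕ) (hab : a ≤ b) (hbG : b ≤ G) (c1 c2 c3 : ℝ) :
    ∑ i : Fin G, (if (i : ℕ) < a then c1 else if (i : ℕ) < b then c2 else c3)
      = a * c1 + ((b : ℝ) - a) * c2 + ((G : ℝ) - b) * c3 := by
  rw [Fin.sum_univ_eq_sum_range (fun i => if i < a then c1 else if i < b then c2 else c3), Finset.range_eq_Ico,
    ← Finset.sum_Ico_consecutive _ (Nat.zero_le b) hbG,
    ← Finset.sum_Ico_consecutive _ (Nat.zero_le a) hab]
  have h1 : ∑ i ∈ Finset.Ico 0 a, (if i < a then c1 else if i < b then c2 else c3) = a * c1 := by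
    rw [Finset.sum_congr rfl (fun i hi => by
      simp only [Finset.mem_Ico] at hi; rw [if_pos hi.2]), Finset.sum_const, Nat.card_Ico]
    simp [mul_comm]
  have h2 : ∑ i ∈ Finset.Ico a b, (if i < a then c1 else if i < b then c2 else c3)
      = ((b : ℝ) - a) * c2 := by
    rw [Finset.sum_congr rfl (fun i hi => by
      simp only [Finset.mem_Ico] at hi
      rw [if_neg (by omega), if_pos hi.2]), Finset.sum_const, Nat.card_Ico]
    rw [nsmul_eq_mul, Nat.cast_sub hab]
  have h3 : ∑ i ∈ Finset.Ico b G, (if i < a then c1 else if i < b then c2 else c3)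
      = ((G : ℝ) - b) * c3 := by
    rw [Finset.sum_congr rfl (fun i hi => by
      simp only [Finset.mem_Ico] at hi
      rw [if_neg (by omega), if_neg (by omega)]), Finset.sum_const, Nat.card_Ico]
    rw [nsmul_eq_mul, Nat.cast_sub hbG]
  rw [h1, h2, h3]

/-- Class-wise CAG score for disjoint-support binary rewards:
`s(k)² = 2G (1 + √(mk / ((G-m)(G-k))))`. -/
theorem stmt_9 (G m k : ℕ) (hG : 2 ≤ G) (hm1 : 1 ≤ m) (hm2 : m ≤ G - 1)
    (hk1 : 1 ≤ k) (hk2 : k ≤ G - m)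
    (rtil r : Fin G → ℝ)
    (hrtil : ∀ i : Fin G, rtil i = if (i : ℕ) < m then 1 else 0)
    (hr : ∀ i : Fin G, r i = if m ≤ (i : ℕ) ∧ (i : ℕ) < m + k then 1 else 0)
    (Atil A : Fin G → ℝ)
    (hAtil : ∀ i, Atil i = (rtil i - (m : ℝ) / G) / (Real.sqrt ((m : ℝ) * (G - m)) / G))
    (hA : ∀ i, A i = (r i - (k : ℝ) / G) / (Real.sqrt ((k : ℝ) * (G - k)) / G)) :
    (A - Atil) ⬝ᵥ (A - Atil) =
      2 * G * (1 + Real.sqrt ((m : ℝ) * k / (((G : ℝ) - m) * ((G : ℝ) - k)))) := by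
  have hmk : m + k ≤ G := by omega
  have hmG : m < G := by omega
  have hkG : k < G := by omega
  set g : ℝ := (G : ℝ) with hg
  set p : ℝ := (m : ℝ) with hp
  set q : ℝ := (k : ℝ) with hq
  have hp1 : (1 : ℝ) ≤ p := by rw [hp]; exact_mod_cast hm1
  have hq1 : (1 : ℝ) ≤ q := by rw [hq]; exact_mod_cast hk1
  have hpq : p + q ≤ g := by rw [hp, hq, hg]; exact_mod_cast hmk
  have hgp : 0 < g - p := by
    have : p < g := by rw [hp, hg]; exact_mod_cast hmG
    linarith
  have hgq : 0 < g - q := by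
    have : q < g := by rw [hq, hg]; exact_mod_cast hkG
    linarith
  have hp0 : 0 < p := by linarith
  have hq0 : 0 < q := by linarith
  have hg0 : 0 < g := by linarith
  set S : ℝ := Real.sqrt (p * (g - p)) with hSdef
  set T : ℝ := Real.sqrt (q * (g - q)) with hTdef
  have hS0 : 0 < S := Real.sqrt_pos.2 (by positivity)
  have hT0 : 0 < T := Real.sqrt_pos.2 (by positivity)
  have hS2 : S ^ 2 = p * (g - p) := Real.sq_sqrt (by positivity)
  have hT2 : T ^ 2 = q * (g - q) := Real.sq_sqrt (by positivity)
  have hSne : S ≠ 0 := ne_of_gt hS0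
  have hTne : T ≠ 0 := ne_of_gt hT0
  have hgne : g ≠ 0 := ne_of_gt hg0
  have hgpne : g - p ≠ 0 := ne_of_gt hgp
  have hgqne : g - q ≠ 0 := ne_of_gt hgq
  have hsqrt : Real.sqrt (p * q / ((g - p) * (g - q))) = S * T / ((g - p) * (g - q)) := by
    have h1 : p * q / ((g - p) * (g - q))
        = (p * (g - p) * (q * (g - q))) / (((g - p) * (g - q)) ^ 2) := by
      field_simp
    rw [h1, Real.sqrt_div (by positivity), Real.sqrt_sq (by positivity),
      Real.sqrt_mul (by positivity), ← hSdef, ← hTdef]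
  set c1 : ℝ := -q / T - (g - p) / S with hc1
  set c2 : ℝ := (g - q) / T + p / S with hc2
  set c3 : ℝ := -q / T + p / S with hc3
  have hdot : (A - Atil) ⬝ᵥ (A - Atil)
      = ∑ i : Fin G, (if (i : ℕ) < m then c1 * c1 else
          if (i : ℕ) < m + k then c2 * c2 else c3 * c3) := by
    simp only [dotProduct, Pi.sub_apply]
    refine Finset.sum_congr rfl (fun i _ => ?_)
    rw [hA, hAtil, hr, hrtil]
    rcases lt_or_ge (i : ℕ) m with h | h
    · have e1 : (if m ≤ (i : ℕ) ∧ (i : ℕ) < m + k then (1:ℝ) else 0) = 0 :=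
        if_neg (by omega)
      have e2 : (if (i : ℕ) < m then (1:ℝ) else 0) = 1 := if_pos h
      rw [e1, e2, if_pos h, hc1]
      field_simp
      ring
    · rcases lt_or_ge (i : ℕ) (m + k) with h' | h'
      · have e1 : (if m ≤ (i : ℕ) ∧ (i : ℕ) < m + k then (1:ℝ) else 0) = 1 :=
          if_pos ⟨h, h'⟩
        have e2 : (if (i : ℕ) < m then (1:ℝ) else 0) = 0 := if_neg (by omega)
        rw [e1, e2, if_neg (by omega), if_pos h', hc2]
        field_simp
        ring
      · have e1 : (if m ≤ (i : ℕ) ∧ (i : ℕ) < m + k then (1:ℝ) else 0) = 0 :=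
          if_neg (by omega)
        have e2 : (if (i : ℕ) < m then (1:ℝ) else 0) = 0 := if_neg (by omega)
        rw [e1, e2, if_neg (by omega), if_neg (by omega), hc3]
        field_simp
        ring
  rw [hdot, sum_three G m (m + k) (by omega) hmk, hsqrt]
  have hcast : ((m + k : ℕ) : ℝ) = p + q := by rw [hp, hq]; push_cast; ring
  rw [hcast, hc1, hc2, hc3]
  have key : S * T / ((g - p) * (g - q)) = p * q / (S * T) := by
    rw [div_eq_div_iff (by positivity) (by positivity)]
    linear_combination (T^2) * hS2 + p * (g - p) * hT2
  rw [key]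
  field_simp
  ring_nf
  rw [← hp]
  linear_combination (-(T^2*g)) * hS2 + (-(S^2*g)) * hT2
end
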